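/- Let q be nonzero and not a root of unity, d ≥ 1, θ_i = q^{2i−d}, θ*_i = q^{d−2i} for 0 ≤ i ≤ d, and let ζ₀,…,ζ_d ∈ K. Define P(x) = Σ_{i=0}^d (−1)^i ζ_i x^i / ([i]_q!)². Then Σ_{i=0}^d η_{d−i}(θ₀) η*_{d−i}(θ*₀) ζ_i = (−1)^d ([d]_q!)² (q−q^{−1})^{2d} · P(1/(q−q^{−1})²). -/

import Mathlib

private lemma stmt9_aux {K : Type*} [Field K] (c Fi G z : K) (hc : c ≠ 0) (hFi : Fi ≠ 0)
    (i d : ℕ) (hi : i ≤ d) :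
    (-1) ^ (d - i) * G ^ 2 * z =
      (-1) ^ d * ((Fi * G) / c ^ d) ^ 2 * c ^ (2 * d) *
        ((-1) ^ i * z * (1 / c ^ 2) ^ i / (Fi / c ^ i) ^ 2) := by
  have hsign : ((-1 : K)) ^ (d - i) * (-1) ^ i = (-1) ^ d := by
    rw [← pow_add, Nat.sub_add_cancel hi]
  have h1 : ((-1 : K)) ^ (i * 2) = 1 := by
    rw [pow_mul']; norm_num
  field_simp
  rw [← hsign]
  have h2 : c ^ (i * 2) * c⁻¹ ^ (i * 2) = 1 := by
    rw [← mul_pow, mul_inv_cancel₀ hc, one_pow]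
  linear_combination (-(G ^ 2 * z * c ^ (d * 2) * (-1) ^ (d - i))) * h1 - (G ^ 2 * z * c ^ (d * 2) * (-1) ^ (d - i) * (-1) ^ (i * 2)) * h2

theorem stmt9 {K : Type*} [Field K] (q : K) (hq : q ≠ 0)
    (hroot : ∀ n : ℕ, 0 < n → q ^ n ≠ 1)
    (d : ℕ) (hd : 1 ≤ d) (ζ : ℕ → K) :
    ∑ i ∈ Finset.range (d + 1),
        (∏ j ∈ Finset.Icc (i + 1) d, (q ^ (-(d : ℤ)) - q ^ (2 * (j : ℤ) - d))) *
          (∏ j ∈ Finset.Icc (i + 1) d, (q ^ (d : ℤ) - q ^ ((d : ℤ) - 2 * j))) * ζ i =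
      (-1) ^ d *
        (∏ n ∈ Finset.range d, ((q ^ ((n : ℤ) + 1) - q ^ (-(n : ℤ) - 1)) / (q - q⁻¹))) ^ 2 *
        (q - q⁻¹) ^ (2 * d) *
        ∑ i ∈ Finset.range (d + 1),
          (-1) ^ i * ζ i * (1 / (q - q⁻¹) ^ 2) ^ i /
            (∏ n ∈ Finset.range i, ((q ^ ((n : ℤ) + 1) - q ^ (-(n : ℤ) - 1)) / (q - q⁻¹))) ^ 2 := by
  have hc : q - q⁻¹ ≠ 0 := by
    intro h
    apply hroot 2 (by norm_num)
    have h1 : q = q⁻¹ := sub_eq_zero.mp h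
    calc q ^ 2 = q * q := sq q
    _ = q * q⁻¹ := by rw [← h1]
    _ = 1 := mul_inv_cancel₀ hq
  set f : ℕ → K := fun j => q ^ (j : ℤ) - q ^ (-(j : ℤ)) with hf_def
  have hf : ∀ j : ℕ, 0 < j → f j ≠ 0 := by
    intro j hj h
    apply hroot (2 * j) (by omega)
    have h1 : q ^ (j : ℤ) = q ^ (-(j : ℤ)) := sub_eq_zero.mp h
    have : q ^ ((j : ℤ) + j) = 1 := by
      rw [zpow_add₀ hq]
      nth_rewrite 2 [h1]
      rw [← zpow_add₀ hq]; norm_num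
    calc q ^ (2 * j) = q ^ ((j : ℤ) + j) := by
          rw [← zpow_natCast]; norm_num; ring_nf
    _ = 1 := this
  have key : ∀ m : ℕ, ∏ n ∈ Finset.range m,
      ((q ^ ((n : ℤ) + 1) - q ^ (-(n : ℤ) - 1)) / (q - q⁻¹)) =
      (∏ j ∈ Finset.Ioc 0 m, f j) / (q - q⁻¹) ^ m := by
    intro m
    induction m with
    | zero => simp
    | succ n ih =>
      rw [Finset.prod_range_succ, ih, Finset.prod_Ioc_succ_top (Nat.zero_le _),
        pow_succ, div_mul_div_comm]
      congr 2
      simp only [hf_def]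
      push_cast
      ring_nf
  rw [key d]
  simp only [Finset.mul_sum]
  apply Finset.sum_congr rfl
  intro i hi
  have hi' : i ≤ d := by
    simp only [Finset.mem_range] at hi; omega
  rw [key i, Finset.Icc_add_one_left_eq_Ioc]
  have hFi : (∏ j ∈ Finset.Ioc 0 i, f j) ≠ 0 :=
    Finset.prod_ne_zero_iff.mpr (fun j hj => hf j (Finset.mem_Ioc.mp hj).1)
  have hsplit : (∏ j ∈ Finset.Ioc 0 i, f j) * (∏ j ∈ Finset.Ioc i d, f j) =
      ∏ j ∈ Finset.Ioc 0 d, f j :=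
    Finset.prod_Ioc_consecutive _ (Nat.zero_le i) hi'
  have hAB : (∏ j ∈ Finset.Ioc i d, (q ^ (-(d : ℤ)) - q ^ (2 * (j : ℤ) - d))) *
      (∏ j ∈ Finset.Ioc i d, (q ^ (d : ℤ) - q ^ ((d : ℤ) - 2 * j))) =
      (-1) ^ (d - i) * (∏ j ∈ Finset.Ioc i d, f j) ^ 2 := by
    rw [← Finset.prod_mul_distrib]
    have : ∀ j ∈ Finset.Ioc i d,
        (q ^ (-(d : ℤ)) - q ^ (2 * (j : ℤ) - d)) * (q ^ (d : ℤ) - q ^ ((d : ℤ) - 2 * j)) =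
        (-1) * (f j) ^ 2 := by
      intro j _
      have e1 : q ^ (-(d : ℤ)) - q ^ (2 * (j : ℤ) - d) =
          -(q ^ ((j : ℤ) - d) * f j) := by
        simp only [hf_def]
        rw [mul_sub, ← zpow_add₀ hq, ← zpow_add₀ hq]
        ring_nf
      have e2 : q ^ (d : ℤ) - q ^ ((d : ℤ) - 2 * j) =
          q ^ ((d : ℤ) - j) * f j := by
        simp only [hf_def]
        rw [mul_sub, ← zpow_add₀ hq, ← zpow_add₀ hq]
        ring_nf
      rw [e1, e2]
      have e3 : q ^ ((j : ℤ) - d) * q ^ ((d : ℤ) - j) = 1 := by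
        rw [← zpow_add₀ hq]; norm_num
      calc -(q ^ ((j : ℤ) - d) * f j) * (q ^ ((d : ℤ) - j) * f j)
          = -(q ^ ((j : ℤ) - d) * q ^ ((d : ℤ) - j)) * (f j) ^ 2 := by ring
      _ = (-1) * (f j) ^ 2 := by rw [e3]
    rw [Finset.prod_congr rfl this, Finset.prod_mul_distrib, Finset.prod_const,
      Nat.card_Ioc, ← Finset.prod_pow]
  rw [hAB]
  have hsign : ((-1 : K)) ^ (d - i) * (-1) ^ i = (-1) ^ d := by
    rw [← pow_add, Nat.sub_add_cancel hi']
  rw [← hsplit]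
  linear_combination stmt9_aux (q - q⁻¹) (∏ j ∈ Finset.Ioc 0 i, f j)
    (∏ j ∈ Finset.Ioc i d, f j) (ζ i) hc hFi i d hi'
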